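/- arXiv:1806.10051 — 5 statements merged into one kernel-verified Lean document; each statement's English description precedes it below -/
import Mathlib

section
/- Fix an n-vertex set V with a linear order, a parameter p ∈ (0,1), and any fixed family G₁,…,G_N of simple graphs on vertex set V with N ≤ n². Let S be a single p-random subset of V, and for each t ∈ {1,…,N} let M_t := Greedy(G_t[S]) and U_t := V \ (M_t ∪ N_{G_t}(M_t)). Then with probability at least 1 − 1/n², for every t ∈ {1,…,N} the maximum degree of G_t[U_t] is at most 5·p⁻¹·ln n. -/
open MeasureTheory ProbabilityTheory
open scoped ENNReal
set_option linter.unusedSectionVars false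
set_option linter.unusedVariables false

section Defs

variable {V : Type*}

/-- `M` is a maximal independent set of the induced subgraph `G[A]`. -/
def IsMISOn (G : SimpleGraph V) (A M : Set V) : Prop :=
  M ⊆ A ∧ (∀ u ∈ M, ∀ v ∈ M, ¬ G.Adj u v) ∧ ∀ v ∈ A, v ∉ M → ∃ u ∈ M, G.Adj u v

/-- `M` is a maximal independent set of `G`. -/
def IsMIS (G : SimpleGraph V) (M : Set V) : Prop :=
  (∀ u ∈ M, ∀ v ∈ M, ¬ G.Adj u v) ∧ ∀ v ∉ M, ∃ u ∈ M, G.Adj u v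

/-- The set of vertices adjacent in `G` to at least one vertex of `A`. -/
def setNbrs (G : SimpleGraph V) (A : Set V) : Set V := {v | ∃ a ∈ A, G.Adj a v}

/-- One pass of the greedy MIS algorithm: scan the list in order, adding a vertex to the
accumulator iff none of its neighbors has already been added. -/
def greedyAux [DecidableEq V] (G : SimpleGraph V) [DecidableRel G.Adj] :
    Finset V → List V → Finset V
  | acc, [] => acc
  | acc, v :: l => greedyAux G (if ∃ u ∈ acc, G.Adj u v then acc else insert v acc) l

/-- The greedy maximal independent set of the induced subgraph `G[S]`, obtained by
iterating over the vertices of `S` in increasing order of the linear order on `V`. -/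
def greedyOn [LinearOrder V] [DecidableEq V] (G : SimpleGraph V) [DecidableRel G.Adj]
    (S : Finset V) : Finset V :=
  greedyAux G ∅ (S.sort (· ≤ ·))

/-- The random subset of `V` described by `ω : V → Bool`. -/
def sampleOf [Fintype V] (ω : V → Bool) : Finset V :=
  Finset.univ.filter fun v => ω v = true

/-- Neighbors (in `G`) of a finite set of vertices. -/
def nbrsFinset [Fintype V] (G : SimpleGraph V) [DecidableRel G.Adj] (M : Finset V) : Finset V :=
  Finset.univ.filter fun v => ∃ m ∈ M, G.Adj m v

/-- `U := V \ (M ∪ N_G(M))` where `M := Greedy(G[S])`. -/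
def survivors [Fintype V] [LinearOrder V] [DecidableEq V] (G : SimpleGraph V)
    [DecidableRel G.Adj] (S : Finset V) : Finset V :=
  Finset.univ \ (greedyOn G S ∪ nbrsFinset G (greedyOn G S))

/-- Degree of `u` in the induced subgraph `G[U]`. -/
def degOn [DecidableEq V] (G : SimpleGraph V) [DecidableRel G.Adj] (U : Finset V) (u : V) : ℕ :=
  (U.filter fun w => G.Adj u w).card

/-- The distribution of a `p`-random subset of `V` (encoded as `V → Bool`):
each vertex is included independently with probability `p`. -/
noncomputable def pRandom (V : Type*) [Fintype V] (p : ℝ) (hp : p ≤ 1) :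
    Measure (V → Bool) :=
  Measure.pi fun _ => (PMF.bernoulli (Real.toNNReal p) (Real.toNNReal_le_one.mpr hp)).toMeasure

instance pRandom.instIsProbabilityMeasure {V : Type*} [Fintype V] (p : ℝ) (hp : p ≤ 1) :
    IsProbabilityMeasure (pRandom V p hp) := by
  unfold pRandom; infer_instance

/-- The joint distribution of `r` mutually independent random subsets of `V`,
the `j`-th being a `p j`-random subset. -/
noncomputable def multiRandom (V : Type*) [Fintype V] {r : ℕ} (p : Fin r → ℝ)
    (hp : ∀ j, p j ≤ 1) : Measure (Fin r → V → Bool) :=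
  Measure.pi fun j => pRandom V (p j) (hp j)

end Defs

section A
variable {V : Type*} [DecidableEq V] (G : SimpleGraph V) [DecidableRel G.Adj]

theorem greedyAux_append (a : Finset V) (l₁ l₂ : List V) :
    greedyAux G a (l₁ ++ l₂) = greedyAux G (greedyAux G a l₁) l₂ := by
  induction l₁ generalizing a with
  | nil => rfl
  | cons x t ih => simp [greedyAux, ih]

theorem subset_greedyAux (a : Finset V) (l : List V) : a ⊆ greedyAux G a l := by
  induction l generalizing a with
  | nil => exact Finset.Subset.refl a
  | cons x t ih =>
    refine Finset.Subset.trans ?_ (ih _)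
    split <;> simp [Finset.subset_insert]

theorem greedyAux_maximal (a : Finset V) (l : List V) {v : V} (hv : v ∈ l) :
    v ∈ greedyAux G a l ∨ ∃ u ∈ greedyAux G a l, G.Adj u v := by
  induction l generalizing a with
  | nil => simp at hv
  | cons x t ih =>
    rcases List.mem_cons.mp hv with rfl | hvt
    · show _ ∨ ∃ u ∈ greedyAux G (if ∃ u ∈ a, G.Adj u v then a else insert v a) t, _
      by_cases h : ∃ u ∈ a, G.Adj u v
      · obtain ⟨u, hu, hadj⟩ := h
        refine Or.inr ⟨u, subset_greedyAux G _ t ?_, hadj⟩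
        rw [if_pos ⟨u, hu, hadj⟩]; exact hu
      · exact Or.inl (subset_greedyAux G _ t (by rw [if_neg h]; exact Finset.mem_insert_self v a))
    · exact ih _ hvt
end A

section B
variable {V : Type*} [LinearOrder V]

theorem filter_lt_append (v : V) {l : List V} (hs : l.Pairwise (· ≤ ·)) :
    l.filter (fun x => x < v) ++ l.filter (fun x => v ≤ x) = l := by
  induction l with
  | nil => rfl
  | cons x t ih =>
    rw [List.pairwise_cons] at hs
    rw [List.filter_cons, List.filter_cons]
    by_cases hx : x < v
    · rw [if_pos (by simpa using hx), if_neg (by simpa using not_le.mpr hx), List.cons_append,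
        ih hs.2]
    · have h1 : t.filter (fun x => decide (x < v)) = [] := by
        rw [List.filter_eq_nil_iff]
        intro y hy
        simp only [decide_eq_true_eq]
        exact fun hyv => hx (lt_of_le_of_lt (hs.1 y hy) hyv)
      have h2 : t.filter (fun x => decide (v ≤ x)) = t := by
        rw [List.filter_eq_self]
        intro y hy
        simp only [decide_eq_true_eq]
        exact le_trans (not_lt.mp hx) (hs.1 y hy)
      rw [if_neg (by simpa using hx), if_pos (by simpa using not_lt.mp hx), h1, h2,
        List.nil_append]

theorem filter_split_mem {v : V} {l : List V} (hs : l.Pairwise (· ≤ ·)) (hn : l.Nodup)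
    (hv : v ∈ l) :
    l = l.filter (fun x => x < v) ++ v :: l.filter (fun x => v < x) := by
  induction l with
  | nil => simp at hv
  | cons x t ih =>
    rw [List.pairwise_cons] at hs
    rw [List.nodup_cons] at hn
    rw [List.filter_cons, List.filter_cons]
    rcases List.mem_cons.mp hv with rfl | hvt
    · have h1 : t.filter (fun x => decide (x < v)) = [] := by
        rw [List.filter_eq_nil_iff]
        intro y hy
        simp only [decide_eq_true_eq]
        exact fun hyv => absurd (le_antisymm (hs.1 y hy) hyv.le) (fun h => hn.1 (h ▸ hy))
      have h2 : t.filter (fun x => decide (v < x)) = t := by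
        rw [List.filter_eq_self]
        intro y hy
        simp only [decide_eq_true_eq]
        exact lt_of_le_of_ne (hs.1 y hy) (fun h => hn.1 (h ▸ hy))
      rw [if_neg (by simp), if_neg (by simp), h1, h2, List.nil_append]
    · have hxv : x < v := lt_of_le_of_ne (hs.1 v hvt) (fun h => hn.1 (h ▸ hvt))
      rw [if_pos (by simpa using hxv), if_neg (by simpa using not_lt.mpr hxv.le),
        List.cons_append]
      exact congrArg (x :: ·) (ih hs.2 hn.2 hvt)
end B

section C
variable {V : Type*} [Fintype V] [LinearOrder V] [DecidableEq V]
  (G : SimpleGraph V) [DecidableRel G.Adj]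

/-- The sorted list of all vertices, filtered by ω. -/
def Lfil [Fintype V] (ω : V → Bool) : List V :=
  (Finset.univ.sort (· ≤ ·)).filter (fun x => ω x)

theorem Lfil_sorted (ω : V → Bool) : (Lfil ω).Pairwise (· ≤ ·) :=
  (Finset.pairwise_sort _ _).filter _

theorem Lfil_nodup (ω : V → Bool) : (Lfil ω).Nodup :=
  (Finset.sort_nodup _ _).filter _

theorem mem_Lfil {ω : V → Bool} {v : V} : v ∈ Lfil ω ↔ ω v = true := by
  simp [Lfil, List.mem_filter]

theorem sort_sampleOf (ω : V → Bool) : (sampleOf ω).sort (· ≤ ·) = Lfil ω := by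
  refine List.Perm.eq_of_pairwise' (Finset.pairwise_sort _ _) (Lfil_sorted ω) ?_
  rw [List.perm_ext_iff_of_nodup (Finset.sort_nodup _ _) (Lfil_nodup ω)]
  intro a
  rw [Finset.mem_sort, mem_Lfil]
  simp [sampleOf]

theorem greedyOn_eq (ω : V → Bool) : greedyOn G (sampleOf ω) = greedyAux G ∅ (Lfil ω) := by
  rw [greedyOn, sort_sampleOf]

/-- The greedy accumulator just before processing vertex `v`. -/
def accB (ω : V → Bool) (v : V) : Finset V :=
  greedyAux G ∅ ((Lfil ω).filter (fun x => x < v))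

/-- `v` is a candidate neighbor of `u`: adjacent to `u` and undominated when processed. -/
def cand (u : V) (ω : V → Bool) (v : V) : Prop :=
  G.Adj u v ∧ ∀ x ∈ accB G ω v, ¬ G.Adj x v

instance candDec (u : V) (ω : V → Bool) : DecidablePred (cand G u ω) := fun v => by
  unfold cand; infer_instance

theorem accB_subset (ω : V → Bool) (v : V) : accB G ω v ⊆ greedyOn G (sampleOf ω) := by
  rw [greedyOn_eq]
  conv_rhs => rw [← filter_lt_append v (Lfil_sorted ω)]
  rw [greedyAux_append]
  exact subset_greedyAux G _ _

theorem mem_survivors {S : Finset V} {u : V} :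
    u ∈ survivors G S ↔ u ∉ greedyOn G S ∧ u ∉ nbrsFinset G (greedyOn G S) := by
  simp [survivors, Finset.mem_sdiff, not_or]

theorem cand_bit_false {ω : V → Bool} {u v : V} (hu : u ∈ survivors G (sampleOf ω))
    (hc : cand G u ω v) : ω v = false := by
  by_contra h
  have hvL : v ∈ Lfil ω := mem_Lfil.mpr (Bool.not_eq_false _ |>.mp h)
  have hsplit := filter_split_mem (Lfil_sorted ω) (Lfil_nodup ω) hvL
  have hvM : v ∈ greedyOn G (sampleOf ω) := by
    rw [greedyOn_eq, hsplit, greedyAux_append]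
    show v ∈ greedyAux G (if ∃ x ∈ accB G ω v, G.Adj x v then _ else _) _
    rw [if_neg (by push_neg; exact fun x hx => hc.2 x hx)]
    exact subset_greedyAux G _ _ (Finset.mem_insert_self v _)
  have : u ∈ nbrsFinset G (greedyOn G (sampleOf ω)) := by
    simp only [nbrsFinset, Finset.mem_filter, Finset.mem_univ, true_and]
    exact ⟨v, hvM, hc.1.symm⟩
  exact (mem_survivors G |>.mp hu).2 this

theorem surv_cand {ω : V → Bool} {u w : V} (hu : u ∈ survivors G (sampleOf ω))
    (hw : w ∈ survivors G (sampleOf ω)) (hadj : G.Adj u w) : cand G u ω w := by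
  refine ⟨hadj, fun x hx hadj2 => ?_⟩
  have hxM := accB_subset G ω w hx
  have : w ∈ nbrsFinset G (greedyOn G (sampleOf ω)) := by
    simp only [nbrsFinset, Finset.mem_filter, Finset.mem_univ, true_and]
    exact ⟨x, hxM, hadj2⟩
  exact (mem_survivors G |>.mp hw).2 this

theorem accB_congr {ω ω' : V → Bool} {v : V} (h : ∀ x, x < v → ω x = ω' x) :
    accB G ω v = accB G ω' v := by
  unfold accB Lfil
  congr 1
  rw [List.filter_filter, List.filter_filter]
  refine List.filter_congr (fun x _ => ?_)
  by_cases hx : x < v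
  · simp [hx, h x hx]
  · simp [hx]

theorem cand_congr {ω ω' : V → Bool} {u v : V} (h : ∀ x, x < v → ω x = ω' x) :
    cand G u ω v ↔ cand G u ω' v := by
  unfold cand
  rw [accB_congr G h]
end C

section D
variable {V : Type*} [Fintype V] [LinearOrder V] [DecidableEq V]

/-- Weight of a boolean outcome. -/
def bw (pe qe : ℝ≥0∞) (b : Bool) : ℝ≥0∞ := if b then pe else qe

/-- Assignments agreeing with `ω₀` outside `R`. -/
def ExtA (R : Finset V) (ω₀ : V → Bool) : Finset (V → Bool) :=
  Finset.univ.filter (fun f => ∀ v ∉ R, f v = ω₀ v)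

theorem mem_Ext {R : Finset V} {ω₀ f : V → Bool} :
    f ∈ ExtA R ω₀ ↔ ∀ v ∉ R, f v = ω₀ v := by simp [ExtA]

theorem Ext_erase {R : Finset V} {m : V} (hm : m ∈ R) (ω₀ : V → Bool) (b : Bool) :
    ExtA (R.erase m) (Function.update ω₀ m b) = (ExtA R ω₀).filter (fun f => f m = b) := by
  ext f
  simp only [mem_Ext, Finset.mem_filter]
  rw [and_comm, ← mem_Ext (R := R)]
  constructor
  · intro h
    have hfm : f m = b := by
      have := h m (Finset.notMem_erase m R)
      rwa [Function.update_self] at this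
    refine ⟨hfm, mem_Ext.mpr fun v hv => ?_⟩
    have hvm : v ≠ m := fun hc => hv (hc ▸ hm)
    have := h v (fun hc => hv (Finset.mem_of_mem_erase hc))
    rwa [Function.update_of_ne hvm] at this
  · rintro ⟨hfm, hf⟩ v hv
    by_cases hvm : v = m
    · subst hvm; rw [Function.update_self]; exact hfm
    · have hvR : v ∉ R := fun hc => hv (Finset.mem_erase.mpr ⟨hvm, hc⟩)
      rw [Function.update_of_ne hvm]
      exact mem_Ext.mp hf v hvR

theorem Ext_split {R : Finset V} {m : V} (hm : m ∈ R) (ω₀ : V → Bool)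
    (g : (V → Bool) → ℝ≥0∞) :
    ∑ f ∈ ExtA R ω₀, g f =
      (∑ f ∈ ExtA (R.erase m) (Function.update ω₀ m true), g f) +
      ∑ f ∈ ExtA (R.erase m) (Function.update ω₀ m false), g f := by
  rw [← Finset.sum_filter_add_sum_filter_not (ExtA R ω₀) (fun f => f m = true) g]
  congr 1
  · rw [Ext_erase hm]
  · rw [Ext_erase hm]
    refine Finset.sum_congr ?_ (fun _ _ => rfl)
    ext f
    simp [Bool.not_eq_true]

/-- Product weight over `R`. -/
noncomputable def wtOn (pe qe : ℝ≥0∞) (R : Finset V) (f : V → Bool) : ℝ≥0∞ := ∏ v ∈ R, bw pe qe (f v)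

theorem fm_of_mem_Ext {R : Finset V} {m : V} (hm : m ∉ R) {ω₀ : V → Bool} {b : Bool}
    {f : V → Bool} (hf : f ∈ ExtA R (Function.update ω₀ m b)) : f m = b := by
  have := mem_Ext.mp hf m hm
  rwa [Function.update_self] at this

theorem sum_wtOn {pe qe : ℝ≥0∞} (hpq : pe + qe = 1) (R : Finset V) :
    ∀ ω₀ : V → Bool, ∑ f ∈ ExtA R ω₀, wtOn pe qe R f = 1 := by
  induction R using Finset.induction_on with
  | empty =>
    intro ω₀
    have : ExtA (∅ : Finset V) ω₀ = {ω₀} := by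
      ext f; simp [mem_Ext, funext_iff]
    simp [this, wtOn]
  | @insert a s ha ih =>
    intro ω₀
    rw [Ext_split (Finset.mem_insert_self a s) ω₀, Finset.erase_insert ha]
    have key : ∀ b : Bool, ∑ f ∈ ExtA s (Function.update ω₀ a b), wtOn pe qe (insert a s) f
        = bw pe qe b := by
      intro b
      have : ∀ f ∈ ExtA s (Function.update ω₀ a b),
          wtOn pe qe (insert a s) f = bw pe qe b * wtOn pe qe s f := by
        intro f hf
        rw [wtOn, Finset.prod_insert ha, fm_of_mem_Ext ha hf]; rfl
      rw [Finset.sum_congr rfl this, ← Finset.mul_sum, ih _, mul_one]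
    rw [key, key]
    simpa [bw] using hpq

/-- The event: at least `D` `Q`-candidates inside `R`, and every `Q`-candidate in `R`
has bit `false`. -/
def condD (Q : V → (V → Bool) → Bool) (R : Finset V) (D : ℕ) (f : V → Bool) : Prop :=
  D ≤ (R.filter (fun v => Q v f = true)).card ∧ ∀ v ∈ R, Q v f = true → f v = false

instance condD_dec (Q : V → (V → Bool) → Bool) (R : Finset V) (D : ℕ) :
    DecidablePred (condD Q R D) := fun f => by unfold condD; infer_instance

theorem main_bound {pe qe : ℝ≥0∞} (hpq : pe + qe = 1)
    (Q : V → (V → Bool) → Bool)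
    (hQ : ∀ v (ω ω' : V → Bool), (∀ x, x < v → ω x = ω' x) → Q v ω = Q v ω') :
    ∀ (n : ℕ) (R : Finset V), R.card = n → ∀ (D : ℕ) (ω₀ : V → Bool),
      ∑ f ∈ (ExtA R ω₀).filter (condD Q R D), wtOn pe qe R f ≤ qe ^ D := by
  intro n
  induction n with
  | zero =>
    intro R hR D ω₀
    have hRe : R = ∅ := Finset.card_eq_zero.mp hR
    subst hRe
    match D with
    | 0 =>
      rw [pow_zero, ← sum_wtOn hpq (∅ : Finset V) ω₀]
      exact Finset.sum_le_sum_of_subset (Finset.filter_subset _ _)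
    | (D + 1) =>
      have : (ExtA (∅ : Finset V) ω₀).filter (condD Q ∅ (D + 1)) = ∅ := by
        refine Finset.filter_false_of_mem (fun f _ hc => ?_)
        simpa using hc.1
      rw [this, Finset.sum_empty]
      exact zero_le
  | succ n ih =>
    intro R hR D ω₀
    match D with
    | 0 =>
      rw [pow_zero, ← sum_wtOn hpq R ω₀]
      exact Finset.sum_le_sum_of_subset (Finset.filter_subset _ _)
    | (D + 1) =>
      have hRne : R.Nonempty := Finset.card_pos.mp (hR ▸ n.succ_pos)
      set m := R.min' hRne with hm
      have hmR : m ∈ R := R.min'_mem hRne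
      have hR' : (R.erase m).card = n := by
        rw [Finset.card_erase_of_mem hmR, hR]; rfl
      -- facts about the branches
      have hagree : ∀ (b : Bool) (f : V → Bool), f ∈ ExtA (R.erase m) (Function.update ω₀ m b) →
          Q m f = Q m ω₀ := by
        intro b f hf
        refine hQ m f ω₀ (fun x hx => ?_)
        have hxR : x ∉ R := fun hc => absurd (R.min'_le x hc) (not_le.mpr hx)
        have := mem_Ext.mp hf x (fun hc => hxR (Finset.mem_of_mem_erase hc))
        rwa [Function.update_of_ne (fun hc : x = m => hxR (hc ▸ hmR))] at this
      have hwt : ∀ f : V → Bool, wtOn pe qe R f = bw pe qe (f m) * wtOn pe qe (R.erase m) f := by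
        intro f
        rw [wtOn, wtOn, ← Finset.mul_prod_erase _ _ hmR]
      rw [Finset.sum_filter, Ext_split hmR ω₀]
      by_cases hc : Q m ω₀ = true
      · -- the `true` branch dies; the `false` branch loses one candidate
        have h1 : ∑ f ∈ ExtA (R.erase m) (Function.update ω₀ m true),
            (if condD Q R (D + 1) f then wtOn pe qe R f else 0) = 0 := by
          refine Finset.sum_eq_zero (fun f hf => ?_)
          rw [if_neg]
          intro hcond
          have h2 : f m = true := fm_of_mem_Ext (Finset.notMem_erase m R) hf
          have h3 : f m = false := hcond.2 m hmR ((hagree true f hf).trans hc)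
          rw [h2] at h3
          exact Bool.noConfusion h3
        have h2 : ∑ f ∈ ExtA (R.erase m) (Function.update ω₀ m false),
            (if condD Q R (D + 1) f then wtOn pe qe R f else 0) ≤ qe * qe ^ D := by
          have hsub : ∀ f ∈ ExtA (R.erase m) (Function.update ω₀ m false),
              (if condD Q R (D + 1) f then wtOn pe qe R f else 0)
              = qe * (if condD Q (R.erase m) D f then wtOn pe qe (R.erase m) f else 0) := by
            intro f hf
            have hfm : f m = false := fm_of_mem_Ext (Finset.notMem_erase m R) hf
            have hQm : Q m f = true := (hagree false f hf).trans hc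
            have hcardR : (R.filter (fun v => Q v f = true)).card
                = ((R.erase m).filter (fun v => Q v f = true)).card + 1 := by
              rw [Finset.filter_erase,
                Finset.card_erase_add_one (Finset.mem_filter.mpr ⟨hmR, hQm⟩)]
            have hiff : condD Q R (D + 1) f ↔ condD Q (R.erase m) D f := by
              unfold condD
              constructor
              · rintro ⟨ha, hb⟩
                rw [hcardR] at ha
                exact ⟨Nat.succ_le_succ_iff.mp ha,
                  fun v hv hq => hb v (Finset.mem_of_mem_erase hv) hq⟩
              · rintro ⟨ha, hb⟩
                refine ⟨by rw [hcardR]; exact Nat.succ_le_succ ha, fun v hv hq => ?_⟩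
                by_cases hvm : v = m
                · subst hvm; exact hfm
                · exact hb v (Finset.mem_erase.mpr ⟨hvm, hv⟩) hq
            rw [if_congr hiff (hwt f) rfl, hfm]
            simp [bw, mul_ite]
          rw [Finset.sum_congr rfl hsub, ← Finset.mul_sum]
          refine mul_le_mul_right ?_ qe
          rw [← Finset.sum_filter]
          exact ih (R.erase m) hR' D _
        rw [h1, zero_add]
        refine le_trans h2 ?_
        rw [pow_succ, mul_comm]
      · -- `m` is not a candidate at all
        have hbranch : ∀ b : Bool, ∑ f ∈ ExtA (R.erase m) (Function.update ω₀ m b),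
            (if condD Q R (D + 1) f then wtOn pe qe R f else 0)
            ≤ bw pe qe b * qe ^ (D + 1) := by
          intro b
          have hsub : ∀ f ∈ ExtA (R.erase m) (Function.update ω₀ m b),
              (if condD Q R (D + 1) f then wtOn pe qe R f else 0)
              = bw pe qe b *
                (if condD Q (R.erase m) (D + 1) f then wtOn pe qe (R.erase m) f else 0) := by
            intro f hf
            have hfm : f m = b := fm_of_mem_Ext (Finset.notMem_erase m R) hf
            have hQm : Q m f = false := by
              rw [hagree b f hf]
              rwa [Bool.not_eq_true] at hc
            have hfilter : R.filter (fun v => Q v f = true)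
                = (R.erase m).filter (fun v => Q v f = true) := by
              rw [Finset.filter_erase, Finset.erase_eq_of_notMem]
              intro hcmem
              have := (Finset.mem_filter.mp hcmem).2
              rw [hQm] at this
              exact Bool.noConfusion this
            have hiff : condD Q R (D + 1) f ↔ condD Q (R.erase m) (D + 1) f := by
              unfold condD
              rw [hfilter]
              constructor
              · rintro ⟨ha, hb⟩
                exact ⟨ha, fun v hv hq => hb v (Finset.mem_of_mem_erase hv) hq⟩
              · rintro ⟨ha, hb⟩
                refine ⟨ha, fun v hv hq => ?_⟩
                by_cases hvm : v = m
                · subst hvm; rw [hQm] at hq; exact Bool.noConfusion hq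
                · exact hb v (Finset.mem_erase.mpr ⟨hvm, hv⟩) hq
            rw [if_congr hiff (hwt f) rfl, hfm]
            rw [mul_ite, mul_zero]
          rw [Finset.sum_congr rfl hsub, ← Finset.mul_sum]
          refine mul_le_mul_right ?_ _
          rw [← Finset.sum_filter]
          exact ih (R.erase m) hR' (D + 1) _
        refine le_trans (add_le_add (hbranch true) (hbranch false)) ?_
        have : bw pe qe true = pe := rfl
        have h2 : bw pe qe false = qe := rfl
        rw [this, h2, ← add_mul, hpq, one_mul]

end D

section E
variable {V : Type*} [Fintype V] [DecidableEq V]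

theorem measurableSet_all (s : Set (V → Bool)) : MeasurableSet s := by
  have h1 : ∀ ω : V → Bool, MeasurableSet ({ω} : Set (V → Bool)) := by
    intro ω
    have : ({ω} : Set (V → Bool)) = Set.pi Set.univ (fun v => {ω v}) := by
      ext f
      simp [Set.mem_pi, funext_iff]
    rw [this]
    exact MeasurableSet.univ_pi (fun v => measurableSet_singleton _)
  have h2 : s = ⋃ ω ∈ s, {ω} := by simp
  rw [h2]
  exact MeasurableSet.biUnion (Set.to_countable _) (fun ω _ => h1 ω)

theorem pRandom_singleton (p : ℝ) (hp0 : 0 ≤ p) (hp : p ≤ 1) (ω : V → Bool)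
    [LinearOrder V] :
    pRandom V p hp {ω} = wtOn (ENNReal.ofReal p) (ENNReal.ofReal (1 - p)) Finset.univ ω := by
  unfold pRandom
  have h : ({ω} : Set (V → Bool)) = Set.pi Set.univ (fun v => {ω v}) := by
    ext f
    simp [Set.mem_pi, funext_iff]
  rw [h, MeasureTheory.Measure.pi_pi]
  refine Finset.prod_congr rfl fun v _ => ?_
  rw [PMF.toMeasure_apply_singleton _ _ (measurableSet_singleton _), PMF.bernoulli_apply]
  cases hv : ω v
  · show ((1 - Real.toNNReal p : NNReal) : ℝ≥0∞) = _
    rw [ENNReal.coe_sub, ENNReal.coe_one, ENNReal.ofReal_sub 1 hp0, ENNReal.ofReal_one]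
    rfl
  · rfl

theorem pRandom_finset (p : ℝ) (hp : p ≤ 1) (F : Finset (V → Bool)) :
    pRandom V p hp ↑F = ∑ ω ∈ F, pRandom V p hp {ω} := by
  have h : (↑F : Set (V → Bool)) = ⋃ ω ∈ F, {ω} := by ext f; simp
  rw [h, measure_biUnion_finset ?_ (fun ω _ => measurableSet_all _)]
  intro x _ y _ hxy
  simp only [Function.onFun, Set.disjoint_singleton]
  exact hxy

end E
/-- For an `n`-vertex set `V` with a linear order, `p ∈ (0,1)`, and a fixed family
`G₁,…,G_N` of graphs on `V` with `N ≤ n²`, letting `S` be a single `p`-random subset of `V`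
and, for each `t`, `M_t := Greedy(G_t[S])` and `U_t := V \ (M_t ∪ N_{G_t}(M_t))`, with
probability at least `1 - 1/n²` every `G_t[U_t]` has maximum degree at most `5·p⁻¹·ln n`. -/
theorem stmt6 {V : Type*} [Fintype V] [LinearOrder V] [DecidableEq V]
    (p : ℝ) (hp0 : 0 < p) (hp1 : p < 1) (N : ℕ) (hN : N ≤ Fintype.card V ^ 2)
    (G : Fin N → SimpleGraph V) [inst : ∀ t, DecidableRel (G t).Adj] :
    1 - 1 / (Fintype.card V : ℝ≥0∞) ^ 2 ≤
      pRandom V p hp1.le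
        {ω | ∀ t, ∀ u ∈ survivors (G t) (sampleOf ω),
          (degOn (G t) (survivors (G t) (sampleOf ω)) u : ℝ) ≤
            5 * p⁻¹ * Real.log (Fintype.card V)} := by
  classical
  set n := Fintype.card V with hn
  rcases Nat.eq_zero_or_pos n with hn0 | hn1
  · rw [hn0]
    norm_num
  -- abbreviations
  have hnR : (1 : ℝ) ≤ (n : ℝ) := by exact_mod_cast hn1
  have hnRpos : (0 : ℝ) < (n : ℝ) := by linarith
  set pe := ENNReal.ofReal p with hpe
  set qe := ENNReal.ofReal (1 - p) with hqe
  have hpq : pe + qe = 1 := by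
    rw [hpe, hqe, ← ENNReal.ofReal_add hp0.le (by linarith)]
    norm_num
  set r : ℝ := 5 * p⁻¹ * Real.log n with hr
  set D : ℕ := ⌈r⌉₊ with hD
  set μ := pRandom V p hp1.le with hμ
  set Gd : Set (V → Bool) := {ω | ∀ t, ∀ u ∈ survivors (G t) (sampleOf ω),
      (degOn (G t) (survivors (G t) (sampleOf ω)) u : ℝ) ≤ r} with hGd
  -- the bad finsets
  set Bad : Fin N → V → Finset (V → Bool) := fun t u =>
    Finset.univ.filter (fun ω => u ∈ survivors (G t) (sampleOf ω) ∧
      D ≤ degOn (G t) (survivors (G t) (sampleOf ω)) u) with hBad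
  -- per-pair probability bound
  have hpair : ∀ (t : Fin N) (u : V), μ ↑(Bad t u) ≤ qe ^ D := by
    intro t u
    set Q : V → (V → Bool) → Bool := fun v ω => decide (cand (G t) u ω v) with hQdef
    have hQ : ∀ v (ω ω' : V → Bool), (∀ x, x < v → ω x = ω' x) → Q v ω = Q v ω' :=
      fun v ω ω' h => decide_eq_decide.mpr (cand_congr (G t) h)
    have hsub : Bad t u ⊆ (ExtA Finset.univ (fun _ => false)).filter
        (condD Q Finset.univ D) := by
      intro ω hω
      rw [hBad, Finset.mem_filter] at hω
      obtain ⟨-, hu, hdeg⟩ := hω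
      rw [Finset.mem_filter]
      refine ⟨mem_Ext.mpr (fun v hv => absurd (Finset.mem_univ v) hv), ?_, ?_⟩
      · refine le_trans hdeg ?_
        refine Finset.card_le_card ?_
        intro w hw
        rw [Finset.mem_filter] at hw
        rw [Finset.mem_filter]
        exact ⟨Finset.mem_univ w, decide_eq_true_eq.mpr (surv_cand (G t) hu hw.1 hw.2)⟩
      · intro v _ hQv
        exact cand_bit_false (G t) hu (of_decide_eq_true hQv)
    calc μ ↑(Bad t u) = ∑ ω ∈ Bad t u, μ {ω} := pRandom_finset p hp1.le _
      _ = ∑ ω ∈ Bad t u, wtOn pe qe Finset.univ ω := by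
          refine Finset.sum_congr rfl fun ω _ => ?_
          rw [hμ, pRandom_singleton p hp0.le hp1.le ω]
      _ ≤ ∑ ω ∈ (ExtA Finset.univ (fun _ => false)).filter (condD Q Finset.univ D),
            wtOn pe qe Finset.univ ω := Finset.sum_le_sum_of_subset hsub
      _ ≤ qe ^ D := main_bound hpq Q hQ Finset.univ.card Finset.univ rfl D _
  -- union bound
  have hcompl : Gdᶜ ⊆ ⋃ tu : Fin N × V, (↑(Bad tu.1 tu.2) : Set (V → Bool)) := by
    intro ω hω
    rw [Set.mem_compl_iff, hGd, Set.mem_setOf_eq] at hω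
    push_neg at hω
    obtain ⟨t, u, hu, hdeg⟩ := hω
    refine Set.mem_iUnion.mpr ⟨⟨t, u⟩, ?_⟩
    rw [Finset.coe_filter]
    exact ⟨Finset.mem_univ ω, hu, Nat.ceil_le.mpr hdeg.le⟩
  have hbadbound : μ Gdᶜ ≤ (N * n : ℕ) * qe ^ D := by
    calc μ Gdᶜ ≤ μ (⋃ tu : Fin N × V, (↑(Bad tu.1 tu.2) : Set (V → Bool))) :=
          measure_mono hcompl
      _ ≤ ∑' tu : Fin N × V, μ ↑(Bad tu.1 tu.2) := measure_iUnion_le _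
      _ = ∑ tu : Fin N × V, μ ↑(Bad tu.1 tu.2) := tsum_fintype _
      _ ≤ Finset.univ.card • qe ^ D :=
          Finset.sum_le_card_nsmul _ _ _ (fun tu _ => hpair tu.1 tu.2)
      _ = (N * n : ℕ) * qe ^ D := by
          rw [nsmul_eq_mul]
          congr 1
          simp [hn]
  -- numeric bound
  have hnum : ((N * n : ℕ) : ℝ≥0∞) * qe ^ D ≤ 1 / (n : ℝ≥0∞) ^ 2 := by
    have hlog : 5 * Real.log n ≤ p * D := by
      have h1 : r ≤ D := Nat.le_ceil r
      have h2 : p * r ≤ p * D := mul_le_mul_of_nonneg_left h1 hp0.le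
      calc 5 * Real.log n = p * r := by
            rw [hr]; field_simp
        _ ≤ p * D := h2
    have hexp : (1 - p) ^ D ≤ ((n : ℝ) ^ 5)⁻¹ := by
      calc (1 - p) ^ D ≤ Real.exp (-p) ^ D :=
            pow_le_pow_left₀ (by linarith) (by linarith [Real.add_one_le_exp (-p)]) D
        _ = Real.exp (-(p * D)) := by
            rw [← Real.exp_nat_mul]
            congr 1
            ring
        _ ≤ Real.exp (-(5 * Real.log n)) := Real.exp_le_exp.mpr (by linarith)
        _ = ((n : ℝ) ^ 5)⁻¹ := by
            rw [Real.exp_neg]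
            congr 1
            rw [show (5 : ℝ) * Real.log n = ((5 : ℕ) : ℝ) * Real.log n by norm_num,
              Real.exp_nat_mul, Real.exp_log hnRpos]
    have hreal : ((N * n : ℕ) : ℝ) * (1 - p) ^ D ≤ ((n : ℝ) ^ 2)⁻¹ := by
      have hcast : ((N * n : ℕ) : ℝ) ≤ (n : ℝ) ^ 3 := by
        have : (N : ℝ) ≤ (n : ℝ) ^ 2 := by exact_mod_cast hN
        push_cast
        nlinarith
      calc ((N * n : ℕ) : ℝ) * (1 - p) ^ D ≤ (n : ℝ) ^ 3 * ((n : ℝ) ^ 5)⁻¹ :=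
            mul_le_mul hcast hexp (pow_nonneg (by linarith) D) (by positivity)
        _ = ((n : ℝ) ^ 2)⁻¹ := by
            field_simp
    calc ((N * n : ℕ) : ℝ≥0∞) * qe ^ D
        = ENNReal.ofReal (((N * n : ℕ) : ℝ) * (1 - p) ^ D) := by
          rw [ENNReal.ofReal_mul (by positivity), ENNReal.ofReal_pow (by linarith),
            ENNReal.ofReal_natCast, hqe]
      _ ≤ ENNReal.ofReal (((n : ℝ) ^ 2)⁻¹) := ENNReal.ofReal_le_ofReal hreal
      _ = 1 / (n : ℝ≥0∞) ^ 2 := by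
          rw [ENNReal.ofReal_inv_of_pos (by positivity), ENNReal.ofReal_pow (by positivity),
            ENNReal.ofReal_natCast, one_div]
  -- conclude
  have hGdc : μ Gdᶜ ≤ 1 / (n : ℝ≥0∞) ^ 2 := le_trans hbadbound hnum
  have hfinal : μ Gd = 1 - μ Gdᶜ := by
    have h := prob_compl_eq_one_sub (μ := μ) (measurableSet_all Gdᶜ)
    rwa [compl_compl] at h
  show (1 : ℝ≥0∞) - 1 / (n : ℝ≥0∞) ^ 2 ≤ μ Gd
  rw [hfinal]
  exact tsub_le_tsub_left hGdc 1
end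

section
/- Let G be a simple graph on a finite vertex set V, let H ⊆ V, and let M_H be a maximal independent set of the induced subgraph G[H]. Define I := N_G(M_H) \ H and L := V \ (H ∪ I), and let M_L be a maximal independent set of the induced subgraph G[L]. Then M_H ∪ M_L is a maximal independent set of G. -/
open MeasureTheory ProbabilityTheory
open scoped ENNReal

/-- Let `G` be a simple graph on a finite vertex set `V`, `H ⊆ V`, and `M_H` a
maximal independent set of `G[H]`. Define `I := N_G(M_H) \ H` and `L := V \ (H ∪ I)`, and let
`M_L` be a maximal independent set of `G[L]`. Then `M_H ∪ M_L` is a maximal independent set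
of `G`. -/
theorem stmt7 {V : Type*} [Finite V] (G : SimpleGraph V) (H MH ML : Set V)
    (hMH : IsMISOn G H MH)
    (hML : IsMISOn G ((H ∪ (setNbrs G MH \ H))ᶜ) ML) :
    IsMIS G (MH ∪ ML) := by
  obtain ⟨hMHsub, hMHind, hMHmax⟩ := hMH
  obtain ⟨hMLsub, hMLind, hMLmax⟩ := hML
  have hMLH : ∀ v ∈ ML, v ∉ H ∧ v ∉ setNbrs G MH := by
    intro v hv
    have := hMLsub hv
    simp only [Set.mem_compl_iff, Set.mem_union, Set.mem_diff, not_or] at this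
    exact ⟨this.1, fun hn => this.2 ⟨hn, this.1⟩⟩
  constructor
  · rintro u (hu | hu) v (hv | hv) hadj
    · exact hMHind u hu v hv hadj
    · exact (hMLH v hv).2 ⟨u, hu, hadj⟩
    · exact (hMLH u hu).2 ⟨v, hv, hadj.symm⟩
    · exact hMLind u hu v hv hadj
  · intro v hv
    simp only [Set.mem_union, not_or] at hv
    by_cases hvH : v ∈ H
    · obtain ⟨u, hu, hadj⟩ := hMHmax v hvH hv.1
      exact ⟨u, Or.inl hu, hadj⟩
    · by_cases hvN : v ∈ setNbrs G MH
      · obtain ⟨a, ha, hadj⟩ := hvN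
        exact ⟨a, Or.inl ha, hadj⟩
      · have hvL : v ∈ (H ∪ (setNbrs G MH \ H))ᶜ := by
          simp only [Set.mem_compl_iff, Set.mem_union, Set.mem_diff, not_or]
          exact ⟨hvH, fun h => hvN h.1⟩
        obtain ⟨u, hu, hadj⟩ := hMLmax v hvL hv.2
        exact ⟨u, Or.inr hu, hadj⟩
end

section
/- Let G be a simple graph on a finite vertex set V and let R ≥ 1. Suppose L⁰ = V and for each r ∈ {1,…,R} there are sets Hʳ, Iʳ, Lʳ that partition Lʳ⁻¹, a set Mʳ ⊆ Hʳ that is a maximal independent set of the induced subgraph G[Hʳ] such that every vertex of Iʳ has a neighbor in Mʳ and no vertex of Lʳ has a neighbor in Mʳ. Let M* be a maximal independent set of G[L^R]. Then M¹ ∪ M² ∪ … ∪ M^R ∪ M* is a maximal independent set of G. -/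
open MeasureTheory ProbabilityTheory
open scoped ENNReal

/-- Let `G` be a simple graph on a finite vertex set `V`, `R ≥ 1`, `L⁰ = V`, and
for each `r ∈ {1,…,R}` let `Hʳ, Iʳ, Lʳ` partition `Lʳ⁻¹`, and let `Mʳ ⊆ Hʳ` be a maximal
independent set of `G[Hʳ]` such that every vertex of `Iʳ` has a neighbor in `Mʳ` and no
vertex of `Lʳ` has a neighbor in `Mʳ`. If `M*` is a maximal independent set of `G[L^R]`,
then `M¹ ∪ … ∪ M^R ∪ M*` is a maximal independent set of `G`. -/
theorem stmt8 {V : Type*} [Finite V] (G : SimpleGraph V) (R : ℕ) (hR : 1 ≤ R)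
    (H I L M : ℕ → Set V) (Mstar : Set V)
    (hL0 : L 0 = Set.univ)
    (hdisj : ∀ r, 1 ≤ r → r ≤ R →
      Disjoint (H r) (I r) ∧ Disjoint (H r) (L r) ∧ Disjoint (I r) (L r))
    (hpart : ∀ r, 1 ≤ r → r ≤ R → H r ∪ I r ∪ L r = L (r - 1))
    (hMsub : ∀ r, 1 ≤ r → r ≤ R → M r ⊆ H r)
    (hMIS : ∀ r, 1 ≤ r → r ≤ R → IsMISOn G (H r) (M r))
    (hI : ∀ r, 1 ≤ r → r ≤ R → ∀ v ∈ I r, ∃ u ∈ M r, G.Adj u v)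
    (hL : ∀ r, 1 ≤ r → r ≤ R → ∀ v ∈ L r, ¬ ∃ u ∈ M r, G.Adj u v)
    (hMstar : IsMISOn G (L R) Mstar) :
    IsMIS G ((⋃ r ∈ Set.Icc 1 R, M r) ∪ Mstar) := by
  set Mset := (⋃ r ∈ Set.Icc 1 R, M r) ∪ Mstar with hMset
  have hstep : ∀ r, 1 ≤ r → r ≤ R → L r ⊆ L (r - 1) := by
    intro r h1 h2
    rw [← hpart r h1 h2]
    exact Set.subset_union_right
  have hchain : ∀ s r, s ≤ r → r ≤ R → L r ⊆ L s := by
    intro s r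
    induction r with
    | zero => intro hs _; interval_cases s; exact subset_rfl
    | succ n ih =>
      intro hs hR'
      rcases Nat.lt_or_ge s (n + 1) with h | h
      · have h1 : L (n + 1) ⊆ L n := by
          have := hstep (n + 1) (Nat.succ_le_succ (Nat.zero_le n)) hR'
          simpa using this
        exact h1.trans (ih (Nat.lt_succ_iff.mp h) (Nat.le_of_succ_le hR'))
      · have : s = n + 1 := le_antisymm hs h
        subst this; exact subset_rfl
  have hMsubL : ∀ r, 1 ≤ r → r ≤ R → M r ⊆ L (r - 1) := by
    intro r h1 h2
    rw [← hpart r h1 h2]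
    exact (hMsub r h1 h2).trans (Set.subset_union_left.trans Set.subset_union_left)
  have hMstarL : Mstar ⊆ L R := hMstar.1
  have hmemMset : ∀ r, 1 ≤ r → r ≤ R → ∀ u ∈ M r, u ∈ Mset := by
    intro r h1 h2 u hu
    exact Set.mem_union_left _ (Set.mem_biUnion ⟨h1, h2⟩ hu)
  -- no vertex of M r is adjacent to a vertex in a strictly later level
  have key : ∀ r, 1 ≤ r → r ≤ R → ∀ u ∈ M r, ∀ v, v ∈ L r → ¬ G.Adj u v := by
    intro r h1 h2 u hu v hv hadj
    exact hL r h1 h2 v hv ⟨u, hu, hadj⟩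
  have keyM : ∀ r s, 1 ≤ r → r ≤ R → 1 ≤ s → s ≤ R → r < s →
      ∀ u ∈ M r, ∀ v ∈ M s, ¬ G.Adj u v := by
    intro r s h1 h2 h3 h4 hrs u hu v hv
    have hvL : v ∈ L r := by
      have : v ∈ L (s - 1) := hMsubL s h3 h4 hv
      exact hchain r (s - 1) (Nat.le_sub_one_of_lt hrs) (Nat.sub_le_of_le_add (h4.trans (Nat.le_succ R))) this
    exact key r h1 h2 u hu v hvL
  constructor
  · -- independence
    intro u hu v hv hadj
    rcases hu with hu | hu
    · obtain ⟨r, hr, hur⟩ := Set.mem_iUnion₂.mp hu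
      rcases hv with hv | hv
      · obtain ⟨s, hs, hvs⟩ := Set.mem_iUnion₂.mp hv
        rcases lt_trichotomy r s with h | h | h
        · exact keyM r s hr.1 hr.2 hs.1 hs.2 h u hur v hvs hadj
        · subst h; exact (hMIS r hr.1 hr.2).2.1 u hur v hvs hadj
        · exact keyM s r hs.1 hs.2 hr.1 hr.2 h v hvs u hur hadj.symm
      · have : v ∈ L r := hchain r R hr.2 le_rfl (hMstarL hv)
        exact key r hr.1 hr.2 u hur v this hadj
    · rcases hv with hv | hv
      · obtain ⟨s, hs, hvs⟩ := Set.mem_iUnion₂.mp hv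
        have : u ∈ L s := hchain s R hs.2 le_rfl (hMstarL hu)
        exact key s hs.1 hs.2 v hvs u this hadj.symm
      · exact hMstar.2.1 u hu v hv hadj
  · -- maximality
    intro v hv
    have main : ∀ r, r ≤ R → v ∈ L r ∨ ∃ u ∈ Mset, G.Adj u v := by
      intro r
      induction r with
      | zero => intro _; left; rw [hL0]; trivial
      | succ n ih =>
        intro hR'
        rcases ih (Nat.le_of_succ_le hR') with hvL | h
        · have h1 : 1 ≤ n + 1 := Nat.succ_le_succ (Nat.zero_le n)
          have hvL' : v ∈ H (n + 1) ∪ I (n + 1) ∪ L (n + 1) := by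
            rw [hpart (n + 1) h1 hR']; simpa using hvL
          rcases hvL' with (hH | hI') | hL'
          · have hvM : v ∉ M (n + 1) := fun hm => hv (hmemMset (n + 1) h1 hR' v hm)
            obtain ⟨u, hu, hadj⟩ := (hMIS (n + 1) h1 hR').2.2 v hH hvM
            exact Or.inr ⟨u, hmemMset (n + 1) h1 hR' u hu, hadj⟩
          · obtain ⟨u, hu, hadj⟩ := hI (n + 1) h1 hR' v hI'
            exact Or.inr ⟨u, hmemMset (n + 1) h1 hR' u hu, hadj⟩
          · exact Or.inl hL'
        · exact Or.inr h
    rcases main R le_rfl with hvL | h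
    · have hvM : v ∉ Mstar := fun hm => hv (Set.mem_union_right _ hm)
      obtain ⟨u, hu, hadj⟩ := hMstar.2.2 v hvL hvM
      exact ⟨u, Set.mem_union_right _ hu, hadj⟩
    · exact h
end

section
/- Let V be a finite vertex set, let r ≥ 1, and let p₁,…,p_r ∈ (0,1) satisfy p_j ≥ 2·p_{j−1} for all 1 < j ≤ r. Let H̃¹,…,H̃ʳ be mutually independent random subsets of V, where H̃ʲ is a p_j-random subset of V. Let e₁,…,e_k be any fixed sequence of pairs of vertices of V with k ≤ 1/(24·p_r²) − 1. Then the probability that the number of indices i for which at least one endpoint of e_i belongs to H̃¹ ∪ … ∪ H̃ʳ is at least p_r⁻¹ is at most 4·k·p_r², and hence at most 1/6. -/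
open MeasureTheory ProbabilityTheory
open scoped ENNReal

section Aux

open MeasureTheory
open scoped ENNReal

lemma aux_pi_eval_meas {ι : Type*} [Fintype ι] {α : ι → Type*}
    [∀ i, MeasurableSpace (α i)] (μ : ∀ i, Measure (α i))
    [∀ i, IsProbabilityMeasure (μ i)] (j : ι) {s : Set (α j)} (_hs : MeasurableSet s) :
    Measure.pi μ (Function.eval j ⁻¹' s) = μ j s := by
  classical
  rw [Set.eval_preimage, Measure.pi_pi]
  rw [Finset.prod_eq_single j]
  · simp
  · intro b _ hb; simp [Function.update_of_ne hb]
  · simp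

lemma aux_sum_p_le {r : ℕ} (hr : 0 < r) (p : Fin r → ℝ) (hp0 : ∀ j, 0 < p j)
    (hgrow : ∀ i j : Fin r, (i : ℕ) + 1 = (j : ℕ) → 2 * p i ≤ p j) :
    ∑ j : Fin r, p j ≤ 2 * p ⟨r - 1, by omega⟩ := by
  classical
  set P : ℕ → ℝ := fun n => if h : n < r then p ⟨n, h⟩ else 0 with hP
  have key : ∀ n, n < r → ∑ j ∈ Finset.range (n + 1), P j ≤ 2 * P n := by
    intro n
    induction n with
    | zero =>
      intro h0
      rw [show (0:ℕ)+1 = 1 from rfl, Finset.sum_range_one]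
      have : 0 ≤ P 0 := by simp only [hP]; rw [dif_pos h0]; exact (hp0 _).le
      linarith
    | succ n ih =>
      intro hn1
      have hn : n < r := by omega
      have hstep : 2 * P n ≤ P (n + 1) := by
        simp only [hP, dif_pos hn, dif_pos hn1]
        exact hgrow ⟨n, hn⟩ ⟨n + 1, hn1⟩ rfl
      rw [Finset.sum_range_succ]
      have := ih hn
      linarith
  have h1 : ∑ j : Fin r, p j = ∑ j ∈ Finset.range r, P j := by
    rw [← Fin.sum_univ_eq_sum_range]
    refine Finset.sum_congr rfl fun j _ => ?_
    simp [hP, j.isLt]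
  have h2 : P (r - 1) = p ⟨r - 1, by omega⟩ := by
    simp only [hP]; rw [dif_pos (show r - 1 < r by omega)]
  rw [h1, ← h2]
  have hrr : r = (r - 1) + 1 := by omega
  rw [hrr]
  exact key (r - 1) (by omega)

lemma aux_meas_coord {V : Type*} [Fintype V] {r : ℕ} (p : Fin r → ℝ) (hp : ∀ j, p j ≤ 1)
    (j : Fin r) (v : V) :
    multiRandom V p hp {ω | ω j v = true} = ENNReal.ofReal (p j) := by
  have hset : {ω : Fin r → V → Bool | ω j v = true}
      = Function.eval j ⁻¹' (Function.eval v ⁻¹' {true}) := rfl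
  have hm : MeasurableSet (Function.eval v ⁻¹' ({true} : Set Bool) : Set (V → Bool)) :=
    measurable_pi_apply (X := fun _ : V => Bool) v (measurableSet_singleton true)
  rw [hset, multiRandom, aux_pi_eval_meas _ j hm]
  rw [pRandom, aux_pi_eval_meas _ v (measurableSet_singleton true)]
  rw [PMF.toMeasure_apply_singleton (p := PMF.bernoulli (Real.toNNReal (p j))
    (Real.toNNReal_le_one.mpr (hp j))) true (measurableSet_singleton true)]
  rfl

end Aux

/-- Let `H̃¹,…,H̃ʳ` be mutually independent random subsets of a finite vertex
set `V`, with `H̃ʲ` a `p_j`-random subset, where `p_j ∈ (0,1)` and `p_j ≥ 2·p_{j−1}`. For any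
fixed pairs `e₁,…,e_k` with `k ≤ 1/(24·p_r²) − 1`, the probability that the number of indices
`i` for which at least one endpoint of `e_i` lies in `H̃¹ ∪ … ∪ H̃ʳ` is at least `p_r⁻¹` is at
most `4·k·p_r²`, and hence at most `1/6`. -/
theorem stmt11 {V : Type*} [Fintype V] (r : ℕ) (hr : 1 ≤ r) (p : Fin r → ℝ)
    (hp0 : ∀ j, 0 < p j) (hp1 : ∀ j, p j < 1)
    (hgrow : ∀ i j : Fin r, (i : ℕ) + 1 = (j : ℕ) → 2 * p i ≤ p j)
    (k : ℕ) (hk : (k : ℝ) ≤ 1 / (24 * p ⟨r - 1, by omega⟩ ^ 2) - 1)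
    (e : Fin k → V × V) :
    multiRandom V p (fun j => (hp1 j).le)
        {ω | (p ⟨r - 1, by omega⟩)⁻¹ ≤
          ((Finset.univ.filter fun i : Fin k =>
            (∃ j, ω j (e i).1 = true) ∨ (∃ j, ω j (e i).2 = true)).card : ℝ)}
        ≤ ENNReal.ofReal (4 * k * p ⟨r - 1, by omega⟩ ^ 2) ∧
      multiRandom V p (fun j => (hp1 j).le)
        {ω | (p ⟨r - 1, by omega⟩)⁻¹ ≤
          ((Finset.univ.filter fun i : Fin k =>
            (∃ j, ω j (e i).1 = true) ∨ (∃ j, ω j (e i).2 = true)).card : ℝ)}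
        ≤ 1 / 6 := by
  classical
  have hrpos : 0 < r := hr
  set last : Fin r := ⟨r - 1, by omega⟩ with hlast
  set q : ℝ := p last with hq
  have hq0 : 0 < q := hp0 last
  set μ := multiRandom V p (fun j => (hp1 j).le) with hμ
  set B : Fin r → V → Set (Fin r → V → Bool) := fun j v => {ω | ω j v = true} with hB
  have hBm : ∀ j v, MeasurableSet (B j v) := by
    intro j v
    have : B j v = (fun ω : Fin r → V → Bool => ω j v) ⁻¹' {true} := rfl
    rw [this]
    exact ((measurable_pi_apply v).comp (measurable_pi_apply j)) (measurableSet_singleton true)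
  set A : Fin k → Set (Fin r → V → Bool) := fun i =>
    {ω | (∃ j, ω j (e i).1 = true) ∨ (∃ j, ω j (e i).2 = true)} with hA
  have hAeq : ∀ i, A i = (⋃ j, B j (e i).1) ∪ ⋃ j, B j (e i).2 := by
    intro i; ext ω; simp [hA, hB, Set.mem_iUnion]
  have hAm : ∀ i, MeasurableSet (A i) := by
    intro i
    rw [hAeq i]
    exact (MeasurableSet.iUnion fun j => hBm j _).union (MeasurableSet.iUnion fun j => hBm j _)
  have hsum : ∑ j : Fin r, p j ≤ 2 * q := aux_sum_p_le hr p hp0 hgrow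
  have hcoord : ∀ j v, μ (B j v) = ENNReal.ofReal (p j) := fun j v =>
    aux_meas_coord p (fun j => (hp1 j).le) j v
  have hcoordsum : ∀ v : V, μ (⋃ j, B j v) ≤ ENNReal.ofReal (2 * q) := by
    intro v
    refine (measure_iUnion_le _).trans ?_
    rw [tsum_fintype]
    calc ∑ j, μ (B j v) = ∑ j, ENNReal.ofReal (p j) := by simp [hcoord]
      _ = ENNReal.ofReal (∑ j, p j) :=
        (ENNReal.ofReal_sum_of_nonneg fun j _ => (hp0 j).le).symm
      _ ≤ ENNReal.ofReal (2 * q) := ENNReal.ofReal_le_ofReal hsum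
  have hAle : ∀ i, μ (A i) ≤ ENNReal.ofReal (4 * q) := by
    intro i
    rw [hAeq i]
    refine (measure_union_le _ _).trans ?_
    calc μ (⋃ j, B j (e i).1) + μ (⋃ j, B j (e i).2)
        ≤ ENNReal.ofReal (2 * q) + ENNReal.ofReal (2 * q) :=
          add_le_add (hcoordsum _) (hcoordsum _)
      _ = ENNReal.ofReal (4 * q) := by
          rw [← ENNReal.ofReal_add (by positivity) (by positivity)]
          congr 1
          ring
  set f : (Fin r → V → Bool) → ℝ≥0∞ := fun ω =>
    ((Finset.univ.filter fun i : Fin k =>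
      (∃ j, ω j (e i).1 = true) ∨ (∃ j, ω j (e i).2 = true)).card : ℝ≥0∞) with hf
  have hf_eq : ∀ ω, f ω = ∑ i : Fin k, (A i).indicator (fun _ => (1 : ℝ≥0∞)) ω := by
    intro ω
    simp only [hf, Finset.card_filter, Nat.cast_sum, Nat.cast_ite, Nat.cast_one, Nat.cast_zero]
    refine Finset.sum_congr rfl fun i _ => ?_
    by_cases h : (∃ j, ω j (e i).1 = true) ∨ (∃ j, ω j (e i).2 = true)
    · rw [if_pos h, Set.indicator_of_mem (show ω ∈ A i from h)]
    · rw [if_neg h, Set.indicator_of_notMem (show ω ∉ A i from h)]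
  have hfm : Measurable f := by
    have : f = fun ω => ∑ i : Fin k, (A i).indicator (fun _ => (1 : ℝ≥0∞)) ω :=
      funext hf_eq
    rw [this]
    exact Finset.measurable_sum _ fun i _ => measurable_const.indicator (hAm i)
  have hint : ∫⁻ ω, f ω ∂μ ≤ ENNReal.ofReal (4 * k * q) := by
    calc ∫⁻ ω, f ω ∂μ = ∑ i : Fin k, μ (A i) := by
          simp_rw [hf_eq]
          rw [lintegral_finset_sum _ fun i _ => measurable_const.indicator (hAm i)]
          exact Finset.sum_congr rfl fun i _ => lintegral_indicator_one (hAm i)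
      _ ≤ ∑ _i : Fin k, ENNReal.ofReal (4 * q) := Finset.sum_le_sum fun i _ => hAle i
      _ = (k : ℝ≥0∞) * ENNReal.ofReal (4 * q) := by
          simp [Finset.sum_const, mul_comm]
      _ = ENNReal.ofReal (4 * k * q) := by
          rw [← ENNReal.ofReal_natCast k, ← ENNReal.ofReal_mul (by positivity)]
          congr 1
          ring
  have hε0 : ENNReal.ofReal q⁻¹ ≠ 0 := (ENNReal.ofReal_pos.mpr (by positivity)).ne'
  have hεtop : ENNReal.ofReal q⁻¹ ≠ ⊤ := ENNReal.ofReal_ne_top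
  have hS_sub : {ω | q⁻¹ ≤ ((Finset.univ.filter fun i : Fin k =>
        (∃ j, ω j (e i).1 = true) ∨ (∃ j, ω j (e i).2 = true)).card : ℝ)}
      ⊆ {ω | ENNReal.ofReal q⁻¹ ≤ f ω} := by
    intro ω hω
    simp only [Set.mem_setOf_eq] at hω ⊢
    calc ENNReal.ofReal q⁻¹
        ≤ ENNReal.ofReal (((Finset.univ.filter fun i : Fin k =>
            (∃ j, ω j (e i).1 = true) ∨ (∃ j, ω j (e i).2 = true)).card : ℝ)) :=
          ENNReal.ofReal_le_ofReal hω
      _ = f ω := by rw [hf]; exact ENNReal.ofReal_natCast _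
  have h1 : μ {ω | q⁻¹ ≤ ((Finset.univ.filter fun i : Fin k =>
        (∃ j, ω j (e i).1 = true) ∨ (∃ j, ω j (e i).2 = true)).card : ℝ)}
      ≤ ENNReal.ofReal (4 * k * q ^ 2) := by
    refine (measure_mono hS_sub).trans ?_
    refine (meas_ge_le_lintegral_div hfm.aemeasurable hε0 hεtop).trans ?_
    rw [ENNReal.ofReal_inv_of_pos hq0, div_eq_mul_inv, inv_inv]
    calc (∫⁻ ω, f ω ∂μ) * ENNReal.ofReal q
        ≤ ENNReal.ofReal (4 * k * q) * ENNReal.ofReal q :=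
          mul_le_mul_left hint _
      _ = ENNReal.ofReal (4 * k * q ^ 2) := by
          rw [← ENNReal.ofReal_mul (by positivity)]
          congr 1
          ring
  have hk2 : 4 * (k : ℝ) * q ^ 2 ≤ 1 / 6 := by
    have hq2 : (0:ℝ) < q ^ 2 := by positivity
    have hkk : (k : ℝ) ≤ 1 / (24 * q ^ 2) := by linarith [hk]
    calc 4 * (k : ℝ) * q ^ 2 ≤ 4 * (1 / (24 * q ^ 2)) * q ^ 2 := by nlinarith
      _ = 1 / 6 := by field_simp; ring
  have h2 : ENNReal.ofReal (4 * k * q ^ 2) ≤ 1 / 6 := by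
    calc ENNReal.ofReal (4 * k * q ^ 2) ≤ ENNReal.ofReal (1 / 6) :=
      ENNReal.ofReal_le_ofReal hk2
      _ ≤ 1 / 6 := by
        rw [show (1 / 6 : ℝ) = (6 : ℝ)⁻¹ by norm_num,
          ENNReal.ofReal_inv_of_pos (by norm_num : (0:ℝ) < 6),
          show ENNReal.ofReal (6 : ℝ) = 6 from by norm_num, one_div]
  exact ⟨h1, h1.trans h2⟩
end

section
/- Let G = (V,E) be a finite simple graph with m ≥ 1 edges. Then for every subset U ⊆ V with |U| ≥ 2, ⌈|E(U)| / (|U| − 1)⌉ ≤ ⌈√m⌉; consequently the arboricity α of G, defined as α = max over subsets U ⊆ V with |U| ≥ 2 of ⌈|E(U)|/(|U|−1)⌉, satisfies α ≤ ⌈√m⌉. -/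
/-- Let `G = (V, E)` be a finite simple graph with `m ≥ 1` edges. Then for every
`U ⊆ V` with `|U| ≥ 2`, `⌈|E(U)|/(|U|−1)⌉ ≤ ⌈√m⌉`, where `E(U)` is the set of edges with both
endpoints in `U`; consequently the arboricity `α = max_{U, |U| ≥ 2} ⌈|E(U)|/(|U|−1)⌉`
satisfies `α ≤ ⌈√m⌉`. -/
theorem stmt16 {V : Type*} [Fintype V] [DecidableEq V] (G : SimpleGraph V)
    [DecidableRel G.Adj] (m : ℕ) (hm : G.edgeFinset.card = m) (hm1 : 1 ≤ m) :
    (∀ U : Finset V, 2 ≤ U.card →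
      ⌈((G.edgeFinset.filter fun e => ∀ v ∈ e, v ∈ U).card : ℝ) /
          ((U.card : ℝ) - 1)⌉₊ ≤ ⌈Real.sqrt m⌉₊) ∧
    (Finset.univ.filter fun U : Finset V => 2 ≤ U.card).sup
        (fun U => ⌈((G.edgeFinset.filter fun e => ∀ v ∈ e, v ∈ U).card : ℝ) /
          ((U.card : ℝ) - 1)⌉₊) ≤ ⌈Real.sqrt m⌉₊ := by
  have key : ∀ U : Finset V, 2 ≤ U.card →
      ⌈((G.edgeFinset.filter fun e => ∀ v ∈ e, v ∈ U).card : ℝ) /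
          ((U.card : ℝ) - 1)⌉₊ ≤ ⌈Real.sqrt m⌉₊ := by
    intro U hU
    set s : ℕ := ⌈Real.sqrt m⌉₊ with hs
    set eU : ℕ := (G.edgeFinset.filter fun e => ∀ v ∈ e, v ∈ U).card with heU
    -- eU ≤ m
    have h1 : eU ≤ m := by rw [← hm]; exact Finset.card_filter_le _ _
    -- eU ≤ C(|U|, 2) via the induced graph on U
    have h2 : eU ≤ U.card.choose 2 := by
      set G' : SimpleGraph {x // x ∈ U} := G.comap Subtype.val with hG'
      have : DecidableRel G'.Adj := Classical.decRel _
      have hsub : (G.edgeFinset.filter fun e => ∀ v ∈ e, v ∈ U) ⊆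
          G'.edgeFinset.image (Sym2.map Subtype.val) := by
        intro e he
        simp only [Finset.mem_filter, SimpleGraph.mem_edgeFinset] at he
        obtain ⟨he1, he2⟩ := he
        induction e using Sym2.ind with
        | _ a b =>
          have ha : a ∈ U := he2 a (Sym2.mem_mk_left a b)
          have hb : b ∈ U := he2 b (Sym2.mem_mk_right a b)
          refine Finset.mem_image.mpr ⟨s(⟨a, ha⟩, ⟨b, hb⟩), ?_, rfl⟩
          simpa [SimpleGraph.mem_edgeFinset, hG', SimpleGraph.comap] using he1
      calc eU ≤ (G'.edgeFinset.image (Sym2.map Subtype.val)).card :=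
            Finset.card_le_card hsub
        _ ≤ G'.edgeFinset.card := Finset.card_image_le
        _ ≤ (Fintype.card {x // x ∈ U}).choose 2 :=
            SimpleGraph.card_edgeFinset_le_card_choose_two
        _ = U.card.choose 2 := by rw [Fintype.card_coe]
    -- m ≤ s * s
    have hsqrt : Real.sqrt m ≤ (s : ℝ) := Nat.le_ceil _
    have hms : (m : ℝ) ≤ (s : ℝ) * (s : ℝ) := by
      have := mul_self_le_mul_self (Real.sqrt_nonneg (m : ℝ)) hsqrt
      rwa [Real.mul_self_sqrt (by positivity)] at this
    have hms' : m ≤ s * s := by exact_mod_cast hms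
    -- main nat inequality
    have hmain : eU ≤ s * (U.card - 1) := by
      rcases le_or_gt s (U.card - 1) with h | h
      · calc eU ≤ m := h1
          _ ≤ s * s := hms'
          _ ≤ s * (U.card - 1) := Nat.mul_le_mul_left _ h
      · have hUs : U.card ≤ s := by omega
        calc eU ≤ U.card.choose 2 := h2
          _ = U.card * (U.card - 1) / 2 := Nat.choose_two_right _
          _ ≤ U.card * (U.card - 1) := Nat.div_le_self _ _
          _ ≤ s * (U.card - 1) := Nat.mul_le_mul_right _ hUs
    -- transfer to ℝ
    have hpos : (0 : ℝ) < (U.card : ℝ) - 1 := by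
      have : (2 : ℝ) ≤ (U.card : ℝ) := by exact_mod_cast hU
      linarith
    rw [Nat.ceil_le, div_le_iff₀ hpos]
    have : ((U.card : ℝ) - 1) = ((U.card - 1 : ℕ) : ℝ) := by
      have : 1 ≤ U.card := by omega
      push_cast [this]
      ring
    rw [this]
    exact_mod_cast hmain
  refine ⟨key, Finset.sup_le fun U hU => key U ?_⟩
  simpa using hU
end
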